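/- arXiv:2511.21943 — 6 statements merged into one kernel-verified Lean document; each statement's English description precedes it below -/
import Mathlib

section
/- For integers n > k ≥ j ≥ 0, the following identity of real numbers holds: ∑_{m=j}^{k} (-1)^{j+m} / ( (m-j)! · (k-m)! · (m+1) · (n-m) ) = (1/((k-j)!·(n+1))) · ( j!·(k-j)!/(k+1)! + (-1)^{k-j} · (n-k-1)!·(k-j)!/(n-j)! ). (The two terms in brackets are the Beta function values B(j+1, k-j+1) and B(n-k, k-j+1), respectively.) -/
open Finset

lemma key_sum (d : ℕ) : ∀ q : ℕ, ∑ i ∈ range (d+1), (-1:ℝ)^i * (d.choose i : ℝ) / ((q:ℝ)+i+1)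
    = (d.factorial : ℝ) * (q.factorial : ℝ) / ((d+q+1).factorial : ℝ) := by
  induction d with
  | zero =>
    intro q
    simp [Nat.factorial_succ]
    have : ((q:ℝ)+1) ≠ 0 := by positivity
    field_simp
  | succ d ih =>
    intro q
    have hS : ∑ i ∈ range (d+2), (-1:ℝ)^i * (d.choose i : ℝ) / ((q:ℝ)+i+1)
        = ∑ i ∈ range (d+1), (-1:ℝ)^i * (d.choose i : ℝ) / ((q:ℝ)+i+1) := by
      rw [Finset.sum_range_succ]
      simp [Nat.choose_succ_self]
    have hT : ∑ i ∈ range (d+2), (-1:ℝ)^i * ((d+1).choose i : ℝ) / ((q:ℝ)+i+1)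
        = (∑ i ∈ range (d+1), (-1:ℝ)^i * (d.choose i : ℝ) / ((q:ℝ)+i+1))
          - ∑ i ∈ range (d+1), (-1:ℝ)^i * (d.choose i : ℝ) / (((q+1:ℕ):ℝ)+i+1) := by
      rw [Finset.sum_range_succ' (fun i => (-1:ℝ)^i * ((d+1).choose i : ℝ) / ((q:ℝ)+i+1)) (d+1)]
      rw [← hS, Finset.sum_range_succ' (fun i => (-1:ℝ)^i * (d.choose i : ℝ) / ((q:ℝ)+i+1)) (d+1)]
      have hcs : ∀ i, ((d+1).choose (i+1) : ℝ) = (d.choose i : ℝ) + (d.choose (i+1) : ℝ) := by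
        intro i; rw [Nat.choose_succ_succ]; push_cast; ring
      simp only [hcs]
      push_cast
      have hterm : ∀ x ∈ range (d+1),
          (-1:ℝ)^(x+1) * ((d.choose x:ℝ) + (d.choose (x+1):ℝ)) / ((q:ℝ)+(x+1)+1)
          = (-1:ℝ)^(x+1)*(d.choose (x+1):ℝ)/((q:ℝ)+(x+1)+1)
            - (-1:ℝ)^x*(d.choose x:ℝ)/((q:ℝ)+1+x+1) := by
        intro x _
        have h2 : (q:ℝ)+1+(x:ℝ)+1 = (q:ℝ)+((x:ℝ)+1)+1 := by ring
        rw [h2]; ring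
      rw [Finset.sum_congr rfl hterm, Finset.sum_sub_distrib]
      simp
      ring
    rw [hT, ih q, ih (q+1)]
    have h1 : (d+1+q+1).factorial = (d+q+2) * (d+q+1).factorial := by
      rw [show d+1+q+1 = (d+q+1)+1 by ring, Nat.factorial_succ]
    have h2 : (d+(q+1)+1).factorial = (d+q+2) * (d+q+1).factorial := by
      rw [show d+(q+1)+1 = (d+q+1)+1 by ring, Nat.factorial_succ]
    have h3 : (q+1).factorial = (q+1) * q.factorial := Nat.factorial_succ q
    have h4 : (d+1).factorial = (d+1) * d.factorial := Nat.factorial_succ d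
    rw [h1, h2, h3, h4]
    have hfq : (q.factorial : ℝ) ≠ 0 := by positivity
    have hfdq : ((d+q+1).factorial : ℝ) ≠ 0 := by positivity
    push_cast
    field_simp
    ring

lemma neg_one_pow_sub' (d i : ℕ) (h : i ≤ d) : (-1:ℝ)^(d-i) = (-1)^d * (-1)^i := by
  have h1 : (-1:ℝ)^(d-i) * (-1)^i = (-1)^d := by rw [← pow_add, Nat.sub_add_cancel h]
  have h2 : (-1:ℝ)^i * (-1)^i = 1 := by rw [← pow_add, ← two_mul, pow_mul]; norm_num
  have h3 : (-1:ℝ)^(d-i) = (-1)^(d-i) * ((-1:ℝ)^i * (-1)^i) := by rw [h2, mul_one]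
  rw [h3, ← mul_assoc, h1]


/-- For integers `n > k ≥ j ≥ 0`,
`∑_{m=j}^{k} (-1)^{j+m} / ((m-j)!(k-m)!(m+1)(n-m))
  = (1/((k-j)!(n+1))) ⬝ ( j!(k-j)!/(k+1)! + (-1)^{k-j} (n-k-1)!(k-j)!/(n-j)! )`. -/
theorem beta_identity (n k j : ℕ) (hjk : j ≤ k) (hkn : k < n) :
    ∑ m ∈ Finset.Icc j k,
        (-1 : ℝ) ^ (j + m) /
          (((m - j).factorial : ℝ) * ((k - m).factorial : ℝ) * ((m : ℝ) + 1) * ((n : ℝ) - m))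
      = (1 / (((k - j).factorial : ℝ) * ((n : ℝ) + 1))) *
          ((j.factorial : ℝ) * ((k - j).factorial : ℝ) / ((k + 1).factorial : ℝ)
            + (-1 : ℝ) ^ (k - j) *
                (((n - k - 1).factorial : ℝ) * ((k - j).factorial : ℝ) / ((n - j).factorial : ℝ))) := by

  set d := k - j with hd
  set q := n - k - 1 with hq
  have hdk : j + d = k := by omega
  have hnq : k + 1 + q = n := by omega
  have hnj : d + q + 1 = n - j := by omega
  -- reindex the sum over Icc j k to range (d+1)
  rw [← Finset.Ico_add_one_right_eq_Icc, Finset.sum_Ico_eq_sum_range]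
  rw [show k + 1 - j = d + 1 by omega]
  -- termwise rewrite
  have hstep : ∀ i ∈ range (d+1),
      (-1 : ℝ) ^ (j + (j + i)) /
          ((((j+i) - j).factorial : ℝ) * ((k - (j+i)).factorial : ℝ) * (((j+i : ℕ) : ℝ) + 1) * ((n : ℝ) - ((j+i : ℕ) : ℝ)))
      = (1 / ((d.factorial : ℝ) * ((n:ℝ)+1))) *
          ((-1:ℝ)^i * (d.choose i : ℝ) / ((j:ℝ)+i+1)
            + (-1:ℝ)^i * (d.choose i : ℝ) / ((n:ℝ)-(j:ℝ)-(i:ℝ))) := by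
    intro i hi
    rw [Finset.mem_range] at hi
    have hid : i ≤ d := by omega
    have e1 : (j+i) - j = i := by omega
    have e2 : k - (j+i) = d - i := by omega
    have e3 : j + (j + i) = 2*j + i := by ring
    rw [e1, e2, e3, pow_add, pow_mul]
    norm_num
    have hch : (d.choose i : ℝ) * (i.factorial : ℝ) * ((d-i).factorial : ℝ) = (d.factorial : ℝ) := by
      exact_mod_cast congrArg (Nat.cast : ℕ → ℝ) (Nat.choose_mul_factorial_mul_factorial hid)
    have h1 : ((j:ℝ)+i+1) ≠ 0 := by positivity
    have h2 : ((n:ℝ)-(j:ℝ)-(i:ℝ)) ≠ 0 := by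
      have : (j:ℝ) + i < n := by exact_mod_cast (by omega : j + i < n)
      intro h; nlinarith
    have h3 : (i.factorial : ℝ) ≠ 0 := by positivity
    have h4 : ((d-i).factorial : ℝ) ≠ 0 := by positivity
    have h5 : ((n:ℝ)+1) ≠ 0 := by positivity
    have h6 : (d.factorial : ℝ) ≠ 0 := by positivity
    have hc : (d.choose i : ℝ) ≠ 0 := by
      have := Nat.choose_pos hid; positivity
    rw [← hch]
    have e4 : (n:ℝ) - ((j:ℝ)+(i:ℝ)) = (n:ℝ)-(j:ℝ)-(i:ℝ) := by ring
    rw [e4]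
    field_simp
    ring
  rw [Finset.sum_congr rfl hstep, ← Finset.mul_sum, Finset.sum_add_distrib]
  have hA : ∑ i ∈ range (d+1), (-1:ℝ)^i * (d.choose i : ℝ) / ((j:ℝ)+i+1)
      = (d.factorial : ℝ) * (j.factorial : ℝ) / ((d+j+1).factorial : ℝ) := key_sum d j
  have hB : ∑ i ∈ range (d+1), (-1:ℝ)^i * (d.choose i : ℝ) / ((n:ℝ)-(j:ℝ)-(i:ℝ))
      = (-1:ℝ)^d * ((d.factorial : ℝ) * (q.factorial : ℝ) / ((d+q+1).factorial : ℝ)) := by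
    rw [← Finset.sum_range_reflect]
    rw [← key_sum d q, Finset.mul_sum]
    refine Finset.sum_congr rfl fun i hi => ?_
    rw [Finset.mem_range] at hi
    have hid : i ≤ d := by omega
    have e1 : d + 1 - 1 - i = d - i := by omega
    have cd : ((d-i:ℕ):ℝ) = (d:ℝ)-(i:ℝ) := Nat.cast_sub hid
    have cdk : (j:ℝ)+(d:ℝ) = (k:ℝ) := by exact_mod_cast hdk
    have cnq : (k:ℝ)+1+(q:ℝ) = (n:ℝ) := by exact_mod_cast hnq
    rw [e1, neg_one_pow_sub' d i hid, Nat.choose_symm hid, cd]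
    have e5 : (n:ℝ)-(j:ℝ)-((d:ℝ)-(i:ℝ)) = (q:ℝ)+(i:ℝ)+1 := by linarith
    rw [e5]; ring
  rw [hA, hB, show d+j+1 = k+1 by omega, hnj]
  ring
end

section
/- For integers n > k ≥ j ≥ 0, the real number S := ∑_{m=j}^{k} (-1)^{j+m} / ( (m-j)! · (k-m)! · (m+1) · (n-m) ) is strictly negative if and only if k−j is odd and j > n−k−1. (Equivalently: if k−j is even then S > 0; if k−j is odd and j ≤ n−k−1 then S ≥ 0; if k−j is odd and j > n−k−1 then S < 0.) -/
open Finset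

private def Pr (d : ℕ) (x : ℝ) : ℝ := ∏ i ∈ range (d+1), (x + i)

private lemma Pr_pos {d : ℕ} {x : ℝ} (hx : 0 < x) : 0 < Pr d x :=
  Finset.prod_pos fun i _ => by positivity

private lemma M_eq : ∀ (d : ℕ) (x : ℝ), 0 < x →
    ∑ t ∈ range (d+1), (-1:ℝ)^t * ((d.choose t : ℕ):ℝ) / (x + t) = (d.factorial : ℝ) / Pr d x
  | 0, x, hx => by simp [Pr]
  | (d+1), x, hx => by
    have hx1 : 0 < x + 1 := by linarith
    have key : (∑ t ∈ range (d+1+1), (-1:ℝ)^t * (((d+1).choose t : ℕ):ℝ) / (x + t))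
        = (∑ t ∈ range (d+1), (-1:ℝ)^t * ((d.choose t : ℕ):ℝ) / (x + t))
          - ∑ t ∈ range (d+1), (-1:ℝ)^t * ((d.choose t : ℕ):ℝ) / ((x+1) + t) := by
      rw [Finset.sum_range_succ'
          (fun t => (-1:ℝ)^t * (((d+1).choose t : ℕ):ℝ) / (x + t)) (d+1),
          Finset.sum_range_succ'
          (fun t => (-1:ℝ)^t * ((d.choose t : ℕ):ℝ) / (x + t)) d]
      have hsplit : ∀ t ∈ range (d+1),
          (-1:ℝ)^(t+1) * (((d+1).choose (t+1):ℕ):ℝ) / (x + ((t+1:ℕ):ℝ))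
          = -((-1:ℝ)^t * ((d.choose t:ℕ):ℝ) / ((x+1) + t))
            + (-1:ℝ)^(t+1) * ((d.choose (t+1):ℕ):ℝ) / (x + ((t+1:ℕ):ℝ)) := by
        intro t ht
        rw [Nat.choose_succ_succ]
        push_cast
        ring
      rw [Finset.sum_congr rfl hsplit, Finset.sum_add_distrib,
          Finset.sum_range_succ
          (fun t => (-1:ℝ)^(t+1) * ((d.choose (t+1):ℕ):ℝ) / (x + ((t+1:ℕ):ℝ))) d]
      rw [Finset.sum_neg_distrib]
      push_cast [Nat.choose_succ_self, Nat.choose_zero_right]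
      ring
    rw [key, M_eq d x hx, M_eq d (x+1) hx1]
    have p1 : Pr (d+1) x = Pr d x * (x + ((d:ℕ)+1)) := by
      rw [Pr, Finset.prod_range_succ]
      rw [Pr]
      push_cast
      ring
    have p2 : Pr (d+1) x = Pr d (x+1) * x := by
      rw [Pr, Finset.prod_range_succ']
      rw [Pr]
      congr 1
      · apply Finset.prod_congr rfl
        intro i _
        push_cast
        ring
      · push_cast
        ring
    have h1 : Pr d x ≠ 0 := ne_of_gt (Pr_pos hx)
    have h2 : Pr d (x+1) ≠ 0 := ne_of_gt (Pr_pos hx1)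
    have hP : Pr (d+1) x ≠ 0 := ne_of_gt (Pr_pos hx)
    rw [div_sub_div _ _ h1 h2, div_eq_div_iff (by exact mul_ne_zero h1 h2) hP, p1]
    have hpp : Pr d (x+1) * x = Pr d x * (x + ((d:ℕ)+1)) := by rw [← p2, p1]
    push_cast [Nat.factorial_succ]
    linear_combination (↑d.factorial * Pr d x : ℝ) * hpp

private lemma L_eq (d : ℕ) (x : ℝ) (hx : 0 < x) :
    ∑ t ∈ range (d+1), (-1:ℝ)^t / ((t.factorial:ℝ) * ((d-t).factorial:ℝ) * (x + t))
      = 1 / Pr d x := by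
  have hfd : (d.factorial:ℝ) ≠ 0 := by exact_mod_cast d.factorial_ne_zero
  have hterm : ∀ t ∈ range (d+1),
      (-1:ℝ)^t / ((t.factorial:ℝ) * ((d-t).factorial:ℝ) * (x + t))
      = ((-1:ℝ)^t * ((d.choose t : ℕ):ℝ) / (x + t)) / (d.factorial:ℝ) := by
    intro t ht
    have htd : t ≤ d := Nat.lt_succ_iff.mp (Finset.mem_range.mp ht)
    have hc : ((d.choose t : ℕ):ℝ) * (t.factorial:ℝ) * ((d-t).factorial:ℝ) = (d.factorial:ℝ) := by
      exact_mod_cast congrArg (fun z : ℕ => (z:ℝ)) (Nat.choose_mul_factorial_mul_factorial htd)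
    have hft : (t.factorial:ℝ) ≠ 0 := by exact_mod_cast t.factorial_ne_zero
    have hfdt : ((d-t).factorial:ℝ) ≠ 0 := by exact_mod_cast (d-t).factorial_ne_zero
    have hxt : x + (t:ℝ) ≠ 0 := by positivity
    field_simp
    linear_combination (-1:ℝ) * hc
  rw [Finset.sum_congr rfl hterm, ← Finset.sum_div, M_eq d x hx, div_right_comm,
      div_self hfd]

/-- For integers `n > k ≥ j ≥ 0`, the sum
`S = ∑_{m=j}^{k} (-1)^{j+m} / ((m-j)!(k-m)!(m+1)(n-m))`
is strictly negative iff `k − j` is odd and `j > n − k − 1`; moreover `S > 0` when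
`k − j` is even and `S ≥ 0` when `k − j` is odd and `j ≤ n − k − 1`. -/
theorem beta_sum_sign (n k j : ℕ) (hjk : j ≤ k) (hkn : k < n) :
    ((∑ m ∈ Finset.Icc j k,
        (-1 : ℝ) ^ (j + m) /
          (((m - j).factorial : ℝ) * ((k - m).factorial : ℝ) * ((m : ℝ) + 1) * ((n : ℝ) - m))
        < 0) ↔ (Odd (k - j) ∧ n - k - 1 < j)) ∧
    (Even (k - j) →
      0 < ∑ m ∈ Finset.Icc j k,
        (-1 : ℝ) ^ (j + m) /
          (((m - j).factorial : ℝ) * ((k - m).factorial : ℝ) * ((m : ℝ) + 1) * ((n : ℝ) - m))) ∧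
    (Odd (k - j) → j ≤ n - k - 1 →
      0 ≤ ∑ m ∈ Finset.Icc j k,
        (-1 : ℝ) ^ (j + m) /
          (((m - j).factorial : ℝ) * ((k - m).factorial : ℝ) * ((m : ℝ) + 1) * ((n : ℝ) - m))) := by
  set d := k - j with hd
  have hkd : k = j + d := by omega
  have hx : (0:ℝ) < (j:ℝ) + 1 := by positivity
  have hy : (0:ℝ) < (n:ℝ) - k := by
    have : (k:ℝ) < (n:ℝ) := by exact_mod_cast hkn
    linarith
  have hnp : (0:ℝ) < (n:ℝ) + 1 := by positivity
  set A := Pr d ((j:ℝ)+1) with hA'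
  set B := Pr d ((n:ℝ)-k) with hB'
  have hA : 0 < A := Pr_pos hx
  have hB : 0 < B := Pr_pos hy
  have hsum : ∑ m ∈ Finset.Icc j k,
        (-1 : ℝ) ^ (j + m) /
          (((m - j).factorial : ℝ) * ((k - m).factorial : ℝ) * ((m : ℝ) + 1) * ((n : ℝ) - m))
      = (1/A + (-1:ℝ)^d * (1/B)) / ((n:ℝ)+1) := by
    calc ∑ m ∈ Finset.Icc j k,
        (-1 : ℝ) ^ (j + m) /
          (((m - j).factorial : ℝ) * ((k - m).factorial : ℝ) * ((m : ℝ) + 1) * ((n : ℝ) - m))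
        = ∑ t ∈ range (d+1),
            (-1 : ℝ) ^ (j + (j+t)) /
            ((((j+t) - j).factorial : ℝ) * ((k - (j+t)).factorial : ℝ)
              * (((j+t : ℕ) : ℝ) + 1) * ((n : ℝ) - ((j+t : ℕ):ℝ))) := by
          rw [← Finset.Ico_add_one_right_eq_Icc, Finset.sum_Ico_eq_sum_range,
            show k + 1 - j = d + 1 from by omega]
      _ = ∑ t ∈ range (d+1),
            (((-1:ℝ)^t / ((t.factorial:ℝ) * ((d-t).factorial:ℝ) * (((j:ℝ)+1) + t)))
             + ((-1:ℝ)^t / ((t.factorial:ℝ) * ((d-t).factorial:ℝ) * (((n:ℝ)-(j:ℝ)) - t))))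
            / ((n:ℝ)+1) := by
          apply Finset.sum_congr rfl
          intro t ht
          have htd : t ≤ d := Nat.lt_succ_iff.mp (Finset.mem_range.mp ht)
          have h1 : j + t - j = t := by omega
          have h2 : k - (j+t) = d - t := by omega
          have hsign : (-1:ℝ)^(j+(j+t)) = (-1:ℝ)^t := by
            rw [show j + (j+t) = 2*j + t from by ring, pow_add, pow_mul, neg_one_sq,
              one_pow, one_mul]
          rw [h1, h2, hsign]
          have hcast1 : ((j+t:ℕ):ℝ) + 1 = ((j:ℝ)+1) + (t:ℝ) := by push_cast; ring
          have hcast2 : (n:ℝ) - ((j+t:ℕ):ℝ) = ((n:ℝ)-(j:ℝ)) - (t:ℝ) := by push_cast; ring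
          rw [hcast1, hcast2]
          have hft : (t.factorial:ℝ) ≠ 0 := by exact_mod_cast t.factorial_ne_zero
          have hfdt : ((d-t).factorial:ℝ) ≠ 0 := by exact_mod_cast (d-t).factorial_ne_zero
          have hXt : (0:ℝ) < ((j:ℝ)+1) + t := by positivity
          have hYt : (0:ℝ) < ((n:ℝ)-(j:ℝ)) - t := by
            have h3 : (j + t : ℕ) < n := by omega
            have h4 : ((j:ℝ) + (t:ℝ)) < (n:ℝ) := by exact_mod_cast h3
            linarith
          have hXt' : ((j:ℝ)+1) + (t:ℝ) ≠ 0 := ne_of_gt hXt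
          have hYt' : ((n:ℝ)-(j:ℝ)) - (t:ℝ) ≠ 0 := ne_of_gt hYt
          have hn1 : ((n:ℝ)+1) ≠ 0 := ne_of_gt hnp
          field_simp
          ring
      _ = ((∑ t ∈ range (d+1),
            (-1:ℝ)^t / ((t.factorial:ℝ) * ((d-t).factorial:ℝ) * (((j:ℝ)+1) + t)))
           + ∑ t ∈ range (d+1),
            (-1:ℝ)^t / ((t.factorial:ℝ) * ((d-t).factorial:ℝ) * (((n:ℝ)-(j:ℝ)) - t)))
          / ((n:ℝ)+1) := by
          rw [← Finset.sum_div, Finset.sum_add_distrib]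
      _ = (1/A + (-1:ℝ)^d * (1/B)) / ((n:ℝ)+1) := by
          congr 1
          have hrefl : ∑ t ∈ range (d+1),
              (-1:ℝ)^t / ((t.factorial:ℝ) * ((d-t).factorial:ℝ) * (((n:ℝ)-(j:ℝ)) - t))
              = (-1:ℝ)^d * ∑ t ∈ range (d+1),
                (-1:ℝ)^t / ((t.factorial:ℝ) * ((d-t).factorial:ℝ) * (((n:ℝ)-(k:ℝ)) + t)) := by
            rw [Finset.mul_sum,
              ← Finset.sum_range_reflect
               (fun t => (-1:ℝ)^t / ((t.factorial:ℝ) * ((d-t).factorial:ℝ) * (((n:ℝ)-(j:ℝ)) - t)))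
               (d+1)]
            apply Finset.sum_congr rfl
            intro t ht
            have htd : t ≤ d := Nat.lt_succ_iff.mp (Finset.mem_range.mp ht)
            have e0 : d + 1 - 1 - t = d - t := by omega
            have e1 : d - (d - t) = t := by omega
            have e2 : ((d - t : ℕ):ℝ) = (d:ℝ) - (t:ℝ) := Nat.cast_sub htd
            have e3 : (-1:ℝ)^(d - t) = (-1:ℝ)^d * (-1:ℝ)^t := by
              rw [← pow_add, show d + t = (d - t) + 2*t from by omega, pow_add, pow_mul,
                neg_one_sq, one_pow, mul_one]
            rw [e0, e1, e2, e3]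
            have e4 : ((n:ℝ)-(j:ℝ)) - ((d:ℝ) - (t:ℝ)) = ((n:ℝ)-(k:ℝ)) + (t:ℝ) := by
              have : (k:ℝ) = (j:ℝ) + (d:ℝ) := by exact_mod_cast hkd
              linarith
            rw [e4]
            ring
          rw [hrefl, L_eq d _ hx, L_eq d _ hy]
  rw [hsum]
  have hposS : Even d → 0 < (1/A + (-1:ℝ)^d * (1/B)) / ((n:ℝ)+1) := by
    intro he
    rw [he.neg_one_pow]
    apply div_pos _ hnp
    have := one_div_pos.mpr hA
    have := one_div_pos.mpr hB
    linarith
  have hnegS : Odd d → n - k - 1 < j → (1/A + (-1:ℝ)^d * (1/B)) / ((n:ℝ)+1) < 0 := by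
    intro ho hlt
    rw [ho.neg_one_pow]
    apply div_neg_of_neg_of_pos _ hnp
    have hnk : n < j + 1 + k := by omega
    have hnk' : (n:ℝ) < (j:ℝ) + 1 + (k:ℝ) := by exact_mod_cast hnk
    have hBA : B < A := by
      rw [hA', hB', Pr, Pr]
      apply Finset.prod_lt_prod
      · intro i _
        have : (0:ℝ) ≤ (i:ℝ) := Nat.cast_nonneg i
        linarith
      · intro i _
        linarith
      · exact ⟨0, Finset.mem_range.mpr (Nat.succ_pos d), by push_cast; linarith⟩
    have := one_div_lt_one_div_of_lt hB hBA
    linarith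
  have hnnS : Odd d → j ≤ n - k - 1 → 0 ≤ (1/A + (-1:ℝ)^d * (1/B)) / ((n:ℝ)+1) := by
    intro ho hle
    rw [ho.neg_one_pow]
    apply div_nonneg _ (le_of_lt hnp)
    have hnk : j + 1 + k ≤ n := by omega
    have hnk' : (j:ℝ) + 1 + (k:ℝ) ≤ (n:ℝ) := by exact_mod_cast hnk
    have hAB : A ≤ B := by
      rw [hA', hB', Pr, Pr]
      apply Finset.prod_le_prod
      · intro i _
        have : (0:ℝ) ≤ (i:ℝ) := Nat.cast_nonneg i
        linarith
      · intro i _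
        linarith
    have := one_div_le_one_div_of_le hA hAB
    linarith
  refine ⟨⟨?_, fun ⟨ho, hlt⟩ => hnegS ho hlt⟩, hposS, hnnS⟩
  intro hS
  rcases Nat.even_or_odd d with he | ho
  · exact absurd (hposS he) (by linarith)
  · refine ⟨ho, ?_⟩
    by_contra hle
    push_neg at hle
    exact absurd (hnnS ho hle) (by linarith)
end

section
/- For integers 0 ≤ j ≤ k < n, one has ∑_{s=0}^{k-j} (-1)^s C(k-j,s) / (s+j-n) = − ∫_{(1,∞)} (1-r)^{k-j} · r^{j-n-1} dr, where each denominator s+j−n is a nonzero (negative) integer and the integral is the Lebesgue integral over the ray (1,∞) with r^{j-n-1} an integer (negative) power of r. -/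
open MeasureTheory

/-- For `0 ≤ j ≤ k < n`,
`∑_{s=0}^{k-j} (-1)^s C(k-j,s)/(s+j-n) = − ∫_{(1,∞)} (1-r)^{k-j} r^{j-n-1} dr`. -/
theorem alternating_sum_eq_neg_tail_integral (n k j : ℕ) (hjk : j ≤ k) (hkn : k < n) :
    ∑ s ∈ Finset.range (k - j + 1),
        (-1 : ℝ) ^ s * ((k - j).choose s : ℝ) / ((s : ℝ) + (j : ℝ) - (n : ℝ))
      = - ∫ r in Set.Ioi (1 : ℝ), (1 - r) ^ (k - j) * r ^ ((j : ℤ) - (n : ℤ) - 1) := by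
  set m := k - j with hm
  have hlt : ∀ s ∈ Finset.range (m + 1), ((s : ℝ) + (j : ℝ) - (n : ℝ) - 1) < -1 := by
    intro s hs
    have hs' : s + j < n := by
      have := Finset.mem_range.mp hs; omega
    have : (s : ℝ) + (j : ℝ) < (n : ℝ) := by exact_mod_cast hs'
    linarith
  have heq : Set.EqOn (fun r : ℝ => (1 - r) ^ m * r ^ ((j : ℤ) - (n : ℤ) - 1))
      (fun r : ℝ => ∑ s ∈ Finset.range (m + 1),
        (-1 : ℝ) ^ s * (m.choose s : ℝ) * r ^ ((s : ℝ) + (j : ℝ) - (n : ℝ) - 1))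
      (Set.Ioi 1) := by
    intro r hr
    have hr0 : (0 : ℝ) < r := lt_trans one_pos hr
    simp only
    have hbin : (1 - r) ^ m = ∑ s ∈ Finset.range (m + 1),
        (-1 : ℝ) ^ s * (m.choose s : ℝ) * r ^ s := by
      rw [show (1 : ℝ) - r = -r + 1 by ring, add_pow]
      apply Finset.sum_congr rfl
      intro s _
      rw [neg_pow]
      ring
    rw [hbin, Finset.sum_mul]
    apply Finset.sum_congr rfl
    intro s _
    have : r ^ s * r ^ ((j : ℤ) - (n : ℤ) - 1) = r ^ ((s : ℝ) + (j : ℝ) - (n : ℝ) - 1) := by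
      rw [← zpow_natCast r s, ← zpow_add₀ hr0.ne',
        ← Real.rpow_intCast r ((s : ℤ) + ((j : ℤ) - (n : ℤ) - 1))]
      norm_num
      ring_nf
    rw [mul_assoc, this]
  rw [setIntegral_congr_fun measurableSet_Ioi heq]
  rw [integral_finset_sum]
  · rw [← Finset.sum_neg_distrib]
    apply Finset.sum_congr rfl
    intro s hs
    rw [MeasureTheory.integral_const_mul,
      integral_Ioi_rpow_of_lt (hlt s hs) one_pos]
    have hne : (s : ℝ) + (j : ℝ) - (n : ℝ) ≠ 0 := by
      have := hlt s hs; intro h; rw [show (s:ℝ)+(j:ℝ)-(n:ℝ)-1 = ((s:ℝ)+(j:ℝ)-(n:ℝ))-1 by ring, h] at this; norm_num at this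
    rw [show (s : ℝ) + (j : ℝ) - (n : ℝ) - 1 + 1 = (s : ℝ) + (j : ℝ) - (n : ℝ) by ring,
      Real.one_rpow]
    field_simp
  · intro s hs
    apply Integrable.const_mul
    exact integrableOn_Ioi_rpow_of_lt (hlt s hs) one_pos
end

section
/- For integers n and k with 0 ≤ k ≤ n−2, the real number ∑_{m=0}^{k} (-1)^m / ( m! · (k-m)! · (m+1) · (n-m) ) is strictly positive. -/
open Finset

private lemma key_sum_s9 (k : ℕ) : ∀ x : ℝ, 0 < x →
    ∑ j ∈ range (k+1), (-1:ℝ)^j * (k.choose j) / (x + j)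
      = (k.factorial : ℝ) / ∏ j ∈ range (k+1), (x + j) := by
  induction k with
  | zero => intro x hx; simp
  | succ k ih =>
    intro x hx
    have hxk : ∀ m : ℕ, (0:ℝ) < ∏ j ∈ range m, (x + j) :=
      fun m => Finset.prod_pos (fun j _ => by positivity)
    have hx1 : ∀ m : ℕ, (0:ℝ) < ∏ j ∈ range m, (x + 1 + j) :=
      fun m => Finset.prod_pos (fun j _ => by positivity)
    have e1 := Finset.sum_range_succ' (fun j => (-1:ℝ)^j * ((k+1).choose j) / (x + j)) (k+1)
    simp only [Nat.cast_add, Nat.cast_one, Nat.cast_zero, pow_zero, Nat.choose_zero_right,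
      Nat.cast_ofNat, add_zero, one_mul, Nat.cast_succ] at e1
    rw [e1]
    have hsplit : ∑ i ∈ range (k+1), (-1:ℝ)^(i+1) * ((k+1).choose (i+1)) / (x + ((i:ℝ)+1))
        = (∑ i ∈ range (k+1), -((-1:ℝ)^i * (k.choose i) / ((x+1) + i)))
          + ∑ i ∈ range (k+1), (-1:ℝ)^(i+1) * (k.choose (i+1)) / (x + ((i:ℝ)+1)) := by
      rw [← Finset.sum_add_distrib]
      refine Finset.sum_congr rfl fun i _ => ?_
      rw [Nat.choose_succ_succ]
      push_cast
      ring
    have hshift : ∑ i ∈ range (k+1), (-1:ℝ)^(i+1) * (k.choose (i+1)) / (x + ((i:ℝ)+1))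
        = (∑ j ∈ range (k+1), (-1:ℝ)^j * (k.choose j) / (x + j)) - 1/x := by
      have f1 := Finset.sum_range_succ' (fun j => (-1:ℝ)^j * (k.choose j) / (x + j)) (k+1)
      have f2 := Finset.sum_range_succ (fun j => (-1:ℝ)^j * (k.choose j) / (x + j)) (k+1)
      simp only [Nat.choose_succ_self, Nat.cast_zero, Nat.cast_add, Nat.cast_one, pow_zero,
        Nat.choose_zero_right, add_zero, one_mul, mul_zero, zero_mul, zero_div,
        Nat.cast_succ] at f1 f2
      rw [f2] at f1
      rw [f1]; ring
    rw [hsplit, hshift, ih x hx]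
    have ih1 := ih (x+1) (by linarith)
    have hcong : ∑ i ∈ range (k+1), -((-1:ℝ)^i * (k.choose i) / ((x+1) + i))
        = -((k.factorial:ℝ) / ∏ j ∈ range (k+1), (x + 1 + j)) := by
      rw [← ih1, Finset.sum_neg_distrib]
    rw [hcong]
    have hP1 : (∏ j ∈ range (k+1+1), (x + j)) = (∏ j ∈ range (k+1), (x + 1 + j)) * x := by
      rw [Finset.prod_range_succ' (fun j => x + (j:ℕ)) (k+1)]
      simp only [Nat.cast_zero, add_zero]
      congr 1
      refine Finset.prod_congr rfl fun j _ => ?_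
      push_cast; ring
    have hP2 : (∏ j ∈ range (k+1+1), (x + j)) = (∏ j ∈ range (k+1), (x + j)) * (x + (k+1)) := by
      rw [Finset.prod_range_succ]; push_cast; ring_nf
    have ha := hxk (k+1)
    have hb := hx1 (k+1)
    have hab := hxk (k+1+1)
    have hfac : ((k+1).factorial : ℝ) = ((k:ℝ)+1) * k.factorial := by
      push_cast [Nat.factorial_succ]; ring
    have h3 : -((k.factorial:ℝ) / ∏ j ∈ range (k+1), (x + 1 + j))
        + ((k.factorial:ℝ) / (∏ j ∈ range (k+1), (x + j)) - 1/x) + 1/x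
        = (k.factorial:ℝ) / (∏ j ∈ range (k+1), (x + j))
          - (k.factorial:ℝ) / (∏ j ∈ range (k+1), (x + 1 + j)) := by ring
    have key : (k.factorial:ℝ) / (∏ j ∈ range (k+1), (x + j))
          - (k.factorial:ℝ) / (∏ j ∈ range (k+1), (x + 1 + j))
        = ((k:ℝ)+1) * (k.factorial:ℝ) / ∏ j ∈ range (k+1+1), (x + j) := by
      rw [div_sub_div _ _ (ne_of_gt ha) (ne_of_gt hb),
        div_eq_div_iff (by positivity) (ne_of_gt hab)]
      linear_combination ((k.factorial:ℝ) * (∏ j ∈ range (k+1), (x + 1 + j))) * hP2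
        - ((k.factorial:ℝ) * (∏ j ∈ range (k+1), (x + j))) * hP1
    rw [hfac]
    linear_combination h3 + key

private lemma prod_fac (d : ℕ) : ∀ k : ℕ,
    (d.factorial : ℝ) * ∏ j ∈ range k, ((d:ℝ)+1+j) = ((d+k).factorial : ℝ) := by
  intro k
  induction k with
  | zero => simp
  | succ k ih =>
    rw [Finset.prod_range_succ, ← mul_assoc, ih]
    have : (d + (k+1)).factorial = (d + k + 1) * (d + k).factorial := by
      rw [show d + (k+1) = (d + k) + 1 by ring, Nat.factorial_succ]
    rw [this]
    push_cast
    ring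

private lemma alt_choose_sum (k : ℕ) :
    ∑ m ∈ range (k+1), (-1:ℝ)^m * (((k+1).choose (m+1) : ℕ):ℝ) = 1 := by
  have h := Int.alternating_sum_range_choose (n := k+1)
  rw [if_neg (Nat.succ_ne_zero k)] at h
  have h0 : ∑ i ∈ range (k+2), (-1:ℝ)^i * ((k+1).choose i) = 0 := by
    exact_mod_cast congrArg (fun z : ℤ => (z : ℝ)) h
  rw [Finset.sum_range_succ' (fun i => (-1:ℝ)^i * ((k+1).choose i)) (k+1)] at h0
  simp only [pow_zero, Nat.choose_zero_right, Nat.cast_one, one_mul, Nat.cast_zero] at h0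
  have h1 : ∑ i ∈ range (k+1), (-1:ℝ)^(i+1) * ((k+1).choose (i+1))
      = - ∑ m ∈ range (k+1), (-1:ℝ)^m * (((k+1).choose (m+1) : ℕ):ℝ) := by
    rw [← Finset.sum_neg_distrib]
    exact Finset.sum_congr rfl fun i _ => by ring
  rw [h1] at h0
  linarith

private lemma fac_lt (n k : ℕ) (h : k+2 ≤ n) :
    (k+1).factorial * (n-k-1).factorial < n.factorial := by
  have h1 : k+1 ≤ n := by omega
  have h2 := Nat.choose_mul_factorial_mul_factorial h1
  have h3 : n - (k+1) = n - k - 1 := by omega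
  rw [h3] at h2
  have h4 : 2 ≤ n.choose (k+1) := by
    have e : n = (n-1)+1 := by omega
    have p1 := Nat.choose_pos (show k ≤ n-1 by omega)
    have p2 := Nat.choose_pos (show k+1 ≤ n-1 by omega)
    calc 2 ≤ (n-1).choose k + (n-1).choose (k+1) := by omega
    _ = ((n-1)+1).choose (k+1) := (Nat.choose_succ_succ _ _).symm
    _ = n.choose (k+1) := by rw [← e]
  have p5 := Nat.factorial_pos (k+1)
  have p6 := Nat.factorial_pos (n-k-1)
  nlinarith

private lemma A_eq (k : ℕ) :
    ∑ m ∈ range (k+1), (-1:ℝ)^m /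
        ((m.factorial : ℝ) * ((k - m).factorial : ℝ) * ((m:ℝ)+1))
      = 1 / ((k+1).factorial : ℝ) := by
  have step : ∀ m ∈ range (k+1),
      (-1:ℝ)^m / ((m.factorial : ℝ) * ((k - m).factorial : ℝ) * ((m:ℝ)+1))
        = (1 / ((k+1).factorial : ℝ)) * ((-1:ℝ)^m * (((k+1).choose (m+1) : ℕ):ℝ)) := by
    intro m hm
    rw [Finset.mem_range] at hm
    have hm' : m + 1 ≤ k + 1 := hm
    have hfac := Nat.choose_mul_factorial_mul_factorial hm'
    have h3 : k + 1 - (m+1) = k - m := by omega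
    rw [h3] at hfac
    have hc : (((k+1).choose (m+1) : ℕ):ℝ) * ((m+1).factorial : ℝ) * ((k-m).factorial : ℝ)
        = ((k+1).factorial : ℝ) := by exact_mod_cast congrArg (fun z : ℕ => (z:ℝ)) hfac
    have hm1 : ((m+1).factorial : ℝ) = ((m:ℝ)+1) * (m.factorial : ℝ) := by
      rw [Nat.factorial_succ]; push_cast; ring
    rw [hm1] at hc
    have f1 : (0:ℝ) < m.factorial := by exact_mod_cast Nat.factorial_pos m
    have f2 : (0:ℝ) < (k-m).factorial := by exact_mod_cast Nat.factorial_pos (k-m)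
    have f3 : (0:ℝ) < (k+1).factorial := by exact_mod_cast Nat.factorial_pos (k+1)
    have f4 : (0:ℝ) < (m:ℝ)+1 := by positivity
    field_simp
    linear_combination (-1:ℝ) * hc
  rw [Finset.sum_congr rfl step, ← Finset.mul_sum, alt_choose_sum k, mul_one]

private lemma B_eq (n k : ℕ) (h : k + 1 ≤ n) :
    ∑ m ∈ range (k+1), (-1:ℝ)^m /
        ((m.factorial : ℝ) * ((k - m).factorial : ℝ) * ((n:ℝ) - m))
      = (-1:ℝ)^k * ((n-k-1).factorial : ℝ) / (n.factorial : ℝ) := by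
  set d : ℕ := n - k - 1 with hd
  have hx : ((n - k : ℕ) : ℝ) = (d:ℝ) + 1 := by
    have : n - k = d + 1 := by omega
    rw [this]; push_cast; ring
  -- step 1: per-term rewrite with binomial coefficients
  have step : ∀ m ∈ range (k+1),
      (-1:ℝ)^m / ((m.factorial : ℝ) * ((k - m).factorial : ℝ) * ((n:ℝ) - m))
        = (1 / (k.factorial : ℝ)) * ((-1:ℝ)^m * ((k.choose m : ℕ):ℝ) / ((n:ℝ) - m)) := by
    intro m hm
    rw [Finset.mem_range] at hm
    have hm' : m ≤ k := by omega
    have hfac := Nat.choose_mul_factorial_mul_factorial hm'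
    have hc : ((k.choose m : ℕ):ℝ) * (m.factorial : ℝ) * ((k-m).factorial : ℝ)
        = (k.factorial : ℝ) := by exact_mod_cast congrArg (fun z : ℕ => (z:ℝ)) hfac
    have f1 : (0:ℝ) < m.factorial := by exact_mod_cast Nat.factorial_pos m
    have f2 : (0:ℝ) < (k-m).factorial := by exact_mod_cast Nat.factorial_pos (k-m)
    have f3 : (0:ℝ) < k.factorial := by exact_mod_cast Nat.factorial_pos k
    have f4 : ((n:ℝ) - m) ≠ 0 := by
      have : (m:ℝ) + 1 ≤ (n:ℝ) := by exact_mod_cast Nat.succ_le_of_lt (by omega)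
      nlinarith
    field_simp
    linear_combination (-1:ℝ) * hc
  rw [Finset.sum_congr rfl step, ← Finset.mul_sum]
  -- step 2: reflect the sum
  have hrefl := Finset.sum_range_reflect
    (fun m => (-1:ℝ)^m * ((k.choose m : ℕ):ℝ) / ((n:ℝ) - m)) (k+1)
  have refl2 : ∑ j ∈ range (k+1),
      (fun m => (-1:ℝ)^m * ((k.choose m : ℕ):ℝ) / ((n:ℝ) - m)) (k+1-1-j)
      = ∑ j ∈ range (k+1),
        (-1:ℝ)^k * ((-1:ℝ)^j * ((k.choose j : ℕ):ℝ) / (((d:ℝ)+1) + j)) := by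
    refine Finset.sum_congr rfl fun j hj => ?_
    rw [Finset.mem_range] at hj
    have hjk : j ≤ k := by omega
    simp only
    have e0 : k + 1 - 1 - j = k - j := by omega
    rw [e0]
    have hsq : ((-1:ℝ))^j * (-1)^j = 1 := by rw [← mul_pow]; norm_num
    have hsgn : (-1:ℝ)^(k-j) = (-1)^k * (-1)^j := by
      calc (-1:ℝ)^(k-j) = (-1)^(k-j) * ((-1)^j * (-1)^j) := by rw [hsq, mul_one]
      _ = (-1)^(k-j+j) * (-1)^j := by rw [pow_add]; ring
      _ = (-1)^k * (-1)^j := by rw [show k - j + j = k by omega]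
    have hch : k.choose (k-j) = k.choose j := Nat.choose_symm hjk
    have hcast : ((n:ℝ) - ((k - j : ℕ):ℝ)) = ((d:ℝ)+1) + j := by
      have e1 : ((k - j : ℕ):ℝ) = (k:ℝ) - j := by
        have : (j:ℝ) ≤ (k:ℝ) := by exact_mod_cast hjk
        rw [Nat.cast_sub hjk]
      have e2 : ((n:ℝ)) = (d:ℝ) + 1 + k := by
        have : n = d + 1 + k := by omega
        rw [this]; push_cast; ring
      rw [e1, e2]; ring
    rw [hsgn, hch, hcast]
    ring
  rw [refl2] at hrefl
  rw [← hrefl, ← Finset.mul_sum]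
  have hdx : (0:ℝ) < (d:ℝ) + 1 := by positivity
  have hkey := key_sum_s9 k ((d:ℝ)+1) hdx
  rw [hkey]
  -- step 3: evaluate the product
  have hprod := prod_fac d (k+1)
  have hdn : d + (k+1) = n := by omega
  rw [hdn] at hprod
  have hpp : (0:ℝ) < ∏ j ∈ range (k+1), ((d:ℝ)+1+j) :=
    Finset.prod_pos (fun j _ => by positivity)
  have hfd : (0:ℝ) < d.factorial := by exact_mod_cast Nat.factorial_pos d
  have hfn : (0:ℝ) < n.factorial := by exact_mod_cast Nat.factorial_pos n
  have hfk : (0:ℝ) < k.factorial := by exact_mod_cast Nat.factorial_pos k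
  have hsimp : (1:ℝ)/(k.factorial:ℝ) * ((-1:ℝ)^k *
      ((k.factorial:ℝ) / ∏ j ∈ range (k+1), ((d:ℝ)+1+j)))
      = (-1:ℝ)^k / ∏ j ∈ range (k+1), ((d:ℝ)+1+j) := by
    field_simp
  rw [hsimp, div_eq_div_iff (ne_of_gt hpp) (ne_of_gt hfn)]
  linear_combination (-(-1:ℝ)^k) * hprod

/-- For `0 ≤ k ≤ n − 2`, the sum `∑_{m=0}^{k} (-1)^m/(m!(k-m)!(m+1)(n-m))` is
strictly positive. -/
theorem alternating_factorial_sum_pos (n k : ℕ) (h : k + 2 ≤ n) :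
    0 < ∑ m ∈ Finset.range (k + 1),
        (-1 : ℝ) ^ m /
          ((m.factorial : ℝ) * ((k - m).factorial : ℝ) * ((m : ℝ) + 1) * ((n : ℝ) - m)) := by
  have step : ∀ m ∈ range (k+1),
      (-1 : ℝ) ^ m /
          ((m.factorial : ℝ) * ((k - m).factorial : ℝ) * ((m : ℝ) + 1) * ((n : ℝ) - m))
        = (1 / ((n:ℝ)+1)) *
            ((-1:ℝ)^m / ((m.factorial : ℝ) * ((k - m).factorial : ℝ) * ((m:ℝ)+1))
             + (-1:ℝ)^m / ((m.factorial : ℝ) * ((k - m).factorial : ℝ) * ((n:ℝ) - m))) := by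
    intro m hm
    rw [Finset.mem_range] at hm
    have hmn : (m:ℝ) + 2 ≤ (n:ℝ) := by exact_mod_cast (by omega : m + 2 ≤ n)
    have f1 : (0:ℝ) < m.factorial := by exact_mod_cast Nat.factorial_pos m
    have f2 : (0:ℝ) < (k-m).factorial := by exact_mod_cast Nat.factorial_pos (k-m)
    have f4 : (0:ℝ) < (m:ℝ)+1 := by positivity
    have f5 : (0:ℝ) < (n:ℝ) - m := by linarith
    have f6 : (0:ℝ) < (n:ℝ) + 1 := by positivity
    field_simp
    ring
  rw [Finset.sum_congr rfl step, ← Finset.mul_sum, Finset.sum_add_distrib,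
    A_eq k, B_eq n k (by omega)]
  have hfd : (0:ℝ) < (n-k-1).factorial := by exact_mod_cast Nat.factorial_pos (n-k-1)
  have hfn : (0:ℝ) < n.factorial := by exact_mod_cast Nat.factorial_pos n
  have hfk : (0:ℝ) < (k+1).factorial := by exact_mod_cast Nat.factorial_pos (k+1)
  apply mul_pos (by positivity)
  rcases Nat.even_or_odd k with he | ho
  · rw [he.neg_one_pow]
    positivity
  · rw [ho.neg_one_pow]
    have hlt : ((n-k-1).factorial : ℝ) / (n.factorial : ℝ) < 1 / ((k+1).factorial : ℝ) := by
      rw [div_lt_div_iff₀ hfn hfk]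
      have := fac_lt n k h
      have : ((k+1).factorial * (n-k-1).factorial : ℕ) < (n.factorial : ℕ) := this
      calc ((n-k-1).factorial : ℝ) * ((k+1).factorial : ℝ)
          = (((k+1).factorial * (n-k-1).factorial : ℕ) : ℝ) := by push_cast; ring
        _ < ((n.factorial : ℕ) : ℝ) := by exact_mod_cast this
        _ = 1 * (n.factorial : ℝ) := by rw [one_mul]
    have : (-1:ℝ) * ((n-k-1).factorial : ℝ) / (n.factorial : ℝ)
        = - (((n-k-1).factorial : ℝ) / (n.factorial : ℝ)) := by ring
    rw [this]
    linarith
end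

section
/- For integers 0 ≤ ℓ ≤ k < n, the following identity of real numbers holds: ∑_{m=ℓ}^{k} (-1)^{ℓ+m} C(n-m,k-m) · C(n-ℓ,m-ℓ) · (n-k)(k+1) / ( 2(m+1)(n-m) ) = (n-k)·C(n,k) / ( 2(n+1)·C(n,ℓ) ) + (-1)^{k-ℓ} (k+1) / ( 2(n+1) ). -/
open Finset Nat

private lemma aux_sum_Icc_shift (f : ℕ → ℝ) (l q : ℕ) :
    ∑ m ∈ Finset.Icc l (l + q), f m = ∑ i ∈ Finset.range (q + 1), f (l + i) := by
  induction q with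
  | zero => simp
  | succ q ih =>
    rw [show l + (q + 1) = (l + q) + 1 from rfl, Finset.sum_Icc_succ_top (by omega),
      Finset.sum_range_succ, ih, Nat.add_assoc]


private lemma aux_neg_one_pow_sub (a b : ℕ) (h : b ≤ a) :
    (-1 : ℝ) ^ (a - b) = (-1) ^ a * (-1) ^ b := by
  obtain ⟨c, rfl⟩ := Nat.exists_eq_add_of_le h
  rw [Nat.add_sub_cancel_left, pow_add, mul_comm ((-1 : ℝ) ^ b), mul_assoc, ← pow_add,
    Even.neg_one_pow ⟨b, rfl⟩, mul_one]


private lemma aux_alt_partial (M : ℕ) : ∀ R : ℕ,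
    ∑ r ∈ Finset.range (R + 1), (-1 : ℝ) ^ r * ((M + 1).choose r : ℝ)
      = (-1) ^ R * (M.choose R : ℝ) := by
  intro R
  induction R with
  | zero => simp
  | succ R ih =>
    rw [Finset.sum_range_succ, ih, Nat.choose_succ_succ M R]
    push_cast
    ring

private lemma aux_beta : ∀ (p l : ℕ),
    ∑ i ∈ Finset.range (p + 1), (-1 : ℝ) ^ i * (p.choose i : ℝ) / ((l : ℝ) + i + 1)
      = ((l ! : ℝ) * (p ! : ℝ)) / (((l + p + 1)! : ℕ) : ℝ) := by
  intro p
  induction p with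
  | zero =>
    intro l
    have h : ((l + 0 + 1)! : ℕ) = (l + 1) * l ! := by
      rw [Nat.add_zero, Nat.factorial_succ]
    rw [h]
    have hl : (l ! : ℝ) ≠ 0 := by exact_mod_cast (Nat.factorial_pos l).ne'
    rw [Finset.sum_range_one]
    push_cast
    rw [div_eq_div_iff (by positivity) (by positivity)]
    norm_num [Nat.factorial]
    ring
  | succ p ih =>
    intro l
    set g : ℕ → ℝ := fun j => (-1 : ℝ) ^ j * (p.choose j : ℝ) / ((l : ℝ) + j + 1) with hg
    have h0 : ∑ i ∈ Finset.range (p + 1 + 1),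
        (-1 : ℝ) ^ i * ((p + 1).choose i : ℝ) / ((l : ℝ) + i + 1)
        = (∑ i ∈ Finset.range (p + 1),
            (-1 : ℝ) ^ (i + 1) * ((p + 1).choose (i + 1) : ℝ) / ((l : ℝ) + (i + 1) + 1))
          + 1 / ((l : ℝ) + 1) := by
      rw [Finset.sum_range_succ']
      norm_num
    have h1 : ∀ i ∈ Finset.range (p + 1),
        (-1 : ℝ) ^ (i + 1) * ((p + 1).choose (i + 1) : ℝ) / ((l : ℝ) + (i + 1) + 1)
        = -((-1 : ℝ) ^ i * (p.choose i : ℝ) / (((l : ℝ) + 1) + i + 1)) + g (i + 1) := by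
      intro i _
      rw [Nat.choose_succ_succ, hg]
      push_cast
      ring
    have h2 : ∑ i ∈ Finset.range (p + 1), g (i + 1)
        = ((l ! : ℝ) * (p ! : ℝ)) / (((l + p + 1)! : ℕ) : ℝ) - 1 / ((l : ℝ) + 1) := by
      have h3 : ∑ i ∈ Finset.range (p + 1 + 1), g i
          = ∑ i ∈ Finset.range (p + 1), g (i + 1) + g 0 := Finset.sum_range_succ' g (p + 1)
      have h4 : ∑ i ∈ Finset.range (p + 1 + 1), g i = ∑ i ∈ Finset.range (p + 1), g i := by
        rw [Finset.sum_range_succ]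
        simp [hg]
      have h5 : g 0 = 1 / ((l : ℝ) + 1) := by simp [hg]
      have h6 := ih l
      rw [h4, ih l] at h3
      rw [h5] at h3
      linarith
    rw [h0, Finset.sum_congr rfl h1, Finset.sum_add_distrib, Finset.sum_neg_distrib, h2]
    have ihl1 := ih (l + 1)
    push_cast at ihl1
    rw [ihl1]
    have e1 : l + 1 + p + 1 = l + p + 2 := by omega
    have e2 : l + (p + 1) + 1 = l + p + 2 := by omega
    rw [e1, e2]
    have f1 : (((l + p + 2)! : ℕ) : ℝ) = ((l : ℝ) + p + 2) * (((l + p + 1)! : ℕ) : ℝ) := by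
      have : (l + p + 2)! = (l + p + 2) * (l + p + 1)! := Nat.factorial_succ (l + p + 1)
      rw [this]; push_cast; ring
    have f2 : (((p + 1)! : ℕ) : ℝ) = ((p : ℝ) + 1) * ((p ! : ℕ) : ℝ) := by
      rw [Nat.factorial_succ]; push_cast; ring
    have f3 : (((l + 1)! : ℕ) : ℝ) = ((l : ℝ) + 1) * ((l ! : ℕ) : ℝ) := by
      rw [Nat.factorial_succ]; push_cast; ring
    have n1 : (((l + p + 1)! : ℕ) : ℝ) ≠ 0 := by exact_mod_cast (Nat.factorial_pos _).ne'
    have n2 : ((l : ℝ) + p + 2) ≠ 0 := by positivity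
    rw [f1, f2, f3]
    field_simp
    ring

private lemma aux_tel (N l : ℕ) : ∀ q : ℕ, q < N →
    ∑ p ∈ Finset.range (q + 1),
        (-1 : ℝ) ^ p * (N.choose p : ℝ) * (((l ! : ℕ) : ℝ) * ((p ! : ℕ) : ℝ) / (((l + p + 1)! : ℕ) : ℝ))
      = (-1) ^ q * (N.choose (q + 1) : ℝ) * (((q + 1)! : ℕ) : ℝ) * ((l ! : ℕ) : ℝ)
          / (((N : ℝ) + l + 1) * (((l + q + 1)! : ℕ) : ℝ))
        + 1 / ((N : ℝ) + l + 1) := by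
  intro q
  induction q with
  | zero =>
    intro hN
    rw [Finset.sum_range_one]
    have h1 : (((l + 0 + 1)! : ℕ) : ℝ) = ((l : ℝ) + 1) * ((l ! : ℕ) : ℝ) := by
      rw [Nat.add_zero, Nat.factorial_succ]; push_cast; ring
    have h2 : (N.choose 1 : ℝ) = N := by rw [Nat.choose_one_right]
    have h3 : (N.choose 0 : ℝ) = 1 := by norm_num
    rw [h1, h2, h3]
    have n1 : ((l ! : ℕ) : ℝ) ≠ 0 := by exact_mod_cast (Nat.factorial_pos l).ne'
    have n2 : ((l : ℝ) + 1) ≠ 0 := by positivity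
    have n3 : ((N : ℝ) + l + 1) ≠ 0 := by positivity
    field_simp
    ring
  | succ q ih =>
    intro hN
    rw [Finset.sum_range_succ, ih (by omega)]
    have key : (N.choose (q + 1 + 1) : ℝ)
        = (N.choose (q + 1) : ℝ) * ((N : ℝ) - q - 1) / ((q : ℝ) + 2) := by
      rw [eq_div_iff (by positivity)]
      have h := Nat.choose_succ_right_eq N (q + 1)
      have h2 : ((N - (q + 1) : ℕ) : ℝ) = (N : ℝ) - (q + 1) := by
        rw [Nat.cast_sub (by omega)]; push_cast; ring
      calc (N.choose (q + 1 + 1) : ℝ) * ((q : ℝ) + 2)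
          = ((N.choose (q + 1 + 1) * (q + 1 + 1) : ℕ) : ℝ) := by push_cast; ring
        _ = ((N.choose (q + 1) * (N - (q + 1)) : ℕ) : ℝ) := by rw [h]
        _ = (N.choose (q + 1) : ℝ) * ((N : ℝ) - q - 1) := by rw [Nat.cast_mul, h2]; ring
    have e1 : l + (q + 1) + 1 = l + q + 2 := by omega
    rw [e1, key]
    have f1 : (((l + q + 2)! : ℕ) : ℝ) = ((l : ℝ) + q + 2) * (((l + q + 1)! : ℕ) : ℝ) := by
      have : (l + q + 2)! = (l + q + 2) * (l + q + 1)! := Nat.factorial_succ (l + q + 1)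
      rw [this]; push_cast; ring
    have f2 : (((q + 1 + 1)! : ℕ) : ℝ) = ((q : ℝ) + 2) * (((q + 1)! : ℕ) : ℝ) := by
      rw [Nat.factorial_succ]; push_cast; ring
    rw [f2]
    rw [f1]
    have n1 : (((l + q + 1)! : ℕ) : ℝ) ≠ 0 := by exact_mod_cast (Nat.factorial_pos _).ne'
    have n2 : ((l : ℝ) + q + 2) ≠ 0 := by positivity
    have n3 : ((N : ℝ) + l + 1) ≠ 0 := by positivity
    have n4 : ((q : ℝ) + 2) ≠ 0 := by positivity
    field_simp
    ring

private lemma aux_ite_shift (f : ℕ → ℝ) (i : ℕ) : ∀ c : ℕ,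
    ∑ p ∈ Finset.range (i + c + 1), (if i ≤ p then f p else 0)
      = ∑ r ∈ Finset.range (c + 1), f (i + r) := by
  intro c
  induction c with
  | zero =>
    rw [Finset.sum_range_succ, Finset.sum_range_one, Finset.sum_eq_zero, if_pos le_rfl,
      zero_add, Nat.add_zero]
    intro p hp
    rw [Finset.mem_range] at hp
    exact if_neg (by omega)
  | succ c ih =>
    rw [show i + (c + 1) + 1 = (i + c + 1) + 1 from by omega, Finset.sum_range_succ, ih,
      if_pos (by omega), Nat.add_assoc]
    exact (Finset.sum_range_succ (fun r => f (i + r)) (c + 1)).symm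


private lemma aux_ite_trunc (f : ℕ → ℝ) (p q : ℕ) (h : p ≤ q) :
    ∑ i ∈ Finset.range (q + 1), (if i ≤ p then f i else 0)
      = ∑ i ∈ Finset.range (p + 1), f i := by
  rw [← Finset.sum_subset (Finset.range_subset_range.2 (by omega : p + 1 ≤ q + 1))
      (fun x _ hx => if_neg (by rw [Finset.mem_range] at hx; omega))]
  exact Finset.sum_congr rfl fun i hi => if_pos (by rw [Finset.mem_range] at hi; omega)


private lemma aux_vander (N q i : ℕ) (hiq : i ≤ q) (hqN : q < N) :
    (N.choose i : ℝ) * ((N - 1 - i).choose (q - i) : ℝ)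
      = (-1) ^ q * ∑ p ∈ Finset.range (q + 1),
          (if i ≤ p then (-1 : ℝ) ^ p * (N.choose p : ℝ) * (p.choose i : ℝ) else 0) := by
  have hq : q = i + (q - i) := by omega
  rw [show q + 1 = i + (q - i) + 1 from by omega,
    aux_ite_shift (fun p => (-1 : ℝ) ^ p * (N.choose p : ℝ) * (p.choose i : ℝ)) i (q - i)]
  have hterm : ∀ r ∈ Finset.range (q - i + 1),
      (-1 : ℝ) ^ (i + r) * (N.choose (i + r) : ℝ) * ((i + r).choose i : ℝ)
        = ((-1) ^ i * (N.choose i : ℝ)) * ((-1) ^ r * (((N - i - 1) + 1).choose r : ℝ)) := by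
    intro r hr
    rw [Finset.mem_range] at hr
    have h1 : N.choose (i + r) * (i + r).choose i = N.choose i * (N - i).choose r := by
      have := Nat.choose_mul (n := N) (show i ≤ i + r by omega)
      rwa [Nat.add_sub_cancel_left] at this
    have h2 : N - i - 1 + 1 = N - i := by omega
    rw [h2, pow_add]
    have h1' := congrArg (fun t : ℕ => (t : ℝ)) h1
    push_cast at h1'
    linear_combination ((-1 : ℝ) ^ i * (-1 : ℝ) ^ r) * h1'
  rw [Finset.sum_congr rfl hterm, ← Finset.mul_sum, aux_alt_partial (N - i - 1) (q - i)]
  have h3 : N - i - 1 = N - 1 - i := by omega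
  rw [h3, aux_neg_one_pow_sub q i (by omega)]
  have eq1 : (-1 : ℝ) ^ q * (-1 : ℝ) ^ q = 1 := by
    rw [← pow_add]; exact Even.neg_one_pow ⟨q, rfl⟩
  have ei1 : (-1 : ℝ) ^ i * (-1 : ℝ) ^ i = 1 := by
    rw [← pow_add]; exact Even.neg_one_pow ⟨i, rfl⟩
  calc (N.choose i : ℝ) * ((N - 1 - i).choose (q - i) : ℝ)
      = ((-1 : ℝ) ^ q * (-1 : ℝ) ^ q) * (((-1 : ℝ) ^ i * (-1 : ℝ) ^ i)
          * ((N.choose i : ℝ) * ((N - 1 - i).choose (q - i) : ℝ))) := by rw [eq1, ei1]; ring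
    _ = (-1) ^ q * ((-1) ^ i * (N.choose i : ℝ)
          * ((-1) ^ q * (-1) ^ i * ((N - 1 - i).choose (q - i) : ℝ))) := by ring


/-- For `0 ≤ ℓ ≤ k < n`,
`∑_{m=ℓ}^{k} (-1)^{ℓ+m} C(n-m,k-m) C(n-ℓ,m-ℓ) (n-k)(k+1)/(2(m+1)(n-m))
  = (n-k) C(n,k) / (2(n+1) C(n,ℓ)) + (-1)^{k-ℓ} (k+1)/(2(n+1))`. -/
theorem coefficient_closed_form (n k l : ℕ) (hlk : l ≤ k) (hkn : k < n) :
    ∑ m ∈ Finset.Icc l k,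
        (-1 : ℝ) ^ (l + m) * ((n - m).choose (k - m) : ℝ) * ((n - l).choose (m - l) : ℝ) *
          (((n : ℝ) - k) * ((k : ℝ) + 1)) / (2 * ((m : ℝ) + 1) * ((n : ℝ) - m))
      = ((n : ℝ) - k) * (n.choose k : ℝ) / (2 * ((n : ℝ) + 1) * (n.choose l : ℝ))
        + (-1 : ℝ) ^ (k - l) * ((k : ℝ) + 1) / (2 * ((n : ℝ) + 1)) := by
  obtain ⟨q, rfl⟩ : ∃ q, k = l + q := ⟨k - l, by omega⟩
  obtain ⟨d, rfl⟩ : ∃ d, n = l + q + 1 + d := ⟨n - (l + q) - 1, by omega⟩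
  clear hlk hkn
  -- Step 1: shift the sum to `range (q+1)`
  rw [aux_sum_Icc_shift]
  -- Step 2: per-term simplification
  have step2 : ∀ i ∈ Finset.range (q + 1),
      (-1 : ℝ) ^ (l + (l + i))
            * ((l + q + 1 + d - (l + i)).choose (l + q - (l + i)) : ℝ)
            * ((l + q + 1 + d - l).choose (l + i - l) : ℝ)
            * ((((l + q + 1 + d : ℕ) : ℝ) - ((l + q : ℕ) : ℝ)) * (((l + q : ℕ) : ℝ) + 1))
            / (2 * (((l + i : ℕ) : ℝ) + 1) * (((l + q + 1 + d : ℕ) : ℝ) - ((l + i : ℕ) : ℝ)))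
        = (((q + 1 + d).choose i : ℝ) * ((q + 1 + d - 1 - i).choose (q - i) : ℝ))
            * ((-1 : ℝ) ^ i * (((l : ℝ) + q + 1) / (2 * ((l : ℝ) + i + 1)))) := by
    intro i hi
    rw [Finset.mem_range] at hi
    set j := q - i with hj
    have hij : i + j = q := by omega
    have e1 : l + q + 1 + d - (l + i) = j + d + 1 := by omega
    have e2 : l + q - (l + i) = j := by omega
    have e3 : l + q + 1 + d - l = q + 1 + d := by omega
    have e4 : l + i - l = i := by omega
    have e5 : q + 1 + d - 1 - i = j + d := by omega
    rw [e1, e2, e3, e4, e5]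
    have hs : (-1 : ℝ) ^ (l + (l + i)) = (-1) ^ i := by
      rw [show l + (l + i) = 2 * l + i from by omega, pow_add, pow_mul]
      norm_num
    rw [hs]
    have hijr : (i : ℝ) + j = q := by exact_mod_cast congrArg (fun t : ℕ => (t : ℝ)) hij
    have r1 : (((l + q + 1 + d : ℕ) : ℝ)) - ((l + i : ℕ) : ℝ) = (j : ℝ) + d + 1 := by
      push_cast; linarith
    have r2 : (((l + q + 1 + d : ℕ) : ℝ)) - ((l + q : ℕ) : ℝ) = (d : ℝ) + 1 := by
      push_cast; ring
    rw [r1, r2]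
    have hcn : (j + d + 1).choose j * (d + 1) = (j + d).choose j * (j + d + 1) := by
      have h1 : (j + d + 1) * (j + d).choose d = (j + d + 1).choose (d + 1) * (d + 1) :=
        Nat.add_one_mul_choose_eq (j + d) d
      have h2 : (j + d + 1).choose j = (j + d + 1).choose (d + 1) := by
        rw [← Nat.choose_symm (show d + 1 ≤ j + d + 1 by omega),
          show j + d + 1 - (d + 1) = j from by omega]
      have h3 : (j + d).choose j = (j + d).choose d := by
        rw [← Nat.choose_symm (show d ≤ j + d by omega), show j + d - d = j from by omega]
      rw [h2, h3, ← h1]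
      ring
    have hcr := congrArg (fun t : ℕ => (t : ℝ)) hcn
    push_cast at hcr
    have hch : ((j + d + 1).choose j : ℝ)
        = ((j + d).choose j : ℝ) * ((j : ℝ) + d + 1) / ((d : ℝ) + 1) := by
      rw [eq_div_iff (by positivity)]
      linear_combination hcr
    rw [hch]
    push_cast
    have n1 : ((l : ℝ) + i + 1) ≠ 0 := by positivity
    have n2 : ((j : ℝ) + d + 1) ≠ 0 := by positivity
    have n3 : ((d : ℝ) + 1) ≠ 0 := by positivity
    field_simp
  rw [Finset.sum_congr rfl step2]
  -- Step 3: Vandermonde split into a double sum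
  have step3 : ∀ i ∈ Finset.range (q + 1),
      (((q + 1 + d).choose i : ℝ) * ((q + 1 + d - 1 - i).choose (q - i) : ℝ))
          * ((-1 : ℝ) ^ i * (((l : ℝ) + q + 1) / (2 * ((l : ℝ) + i + 1))))
        = ∑ p ∈ Finset.range (q + 1),
            (if i ≤ p then
              (-1 : ℝ) ^ p * ((q + 1 + d).choose p : ℝ) * (p.choose i : ℝ)
                * ((-1 : ℝ) ^ q * ((-1 : ℝ) ^ i * (((l : ℝ) + q + 1) / (2 * ((l : ℝ) + i + 1)))))
            else 0) := by
    intro i hi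
    rw [Finset.mem_range] at hi
    rw [aux_vander (q + 1 + d) q i (by omega) (by omega), mul_comm ((-1 : ℝ) ^ q),
      mul_assoc, Finset.sum_mul]
    refine Finset.sum_congr rfl fun p _ => ?_
    rw [ite_mul, zero_mul]
  rw [Finset.sum_congr rfl step3, Finset.sum_comm]
  -- Step 4: evaluate the inner (Beta) sum
  have step4 : ∀ p ∈ Finset.range (q + 1),
      (∑ i ∈ Finset.range (q + 1),
          (if i ≤ p then
            (-1 : ℝ) ^ p * ((q + 1 + d).choose p : ℝ) * (p.choose i : ℝ)
              * ((-1 : ℝ) ^ q * ((-1 : ℝ) ^ i * (((l : ℝ) + q + 1) / (2 * ((l : ℝ) + i + 1)))))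
          else 0))
        = ((-1 : ℝ) ^ p * ((q + 1 + d).choose p : ℝ)
            * (((l ! : ℕ) : ℝ) * ((p ! : ℕ) : ℝ) / (((l + p + 1)! : ℕ) : ℝ)))
          * ((-1 : ℝ) ^ q * (((l : ℝ) + q + 1) / 2)) := by
    intro p hp
    rw [Finset.mem_range] at hp
    rw [aux_ite_trunc _ p q (by omega)]
    have inner : ∀ i ∈ Finset.range (p + 1),
        (-1 : ℝ) ^ p * ((q + 1 + d).choose p : ℝ) * (p.choose i : ℝ)
            * ((-1 : ℝ) ^ q * ((-1 : ℝ) ^ i * (((l : ℝ) + q + 1) / (2 * ((l : ℝ) + i + 1)))))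
          = ((-1 : ℝ) ^ p * ((q + 1 + d).choose p : ℝ) * ((-1 : ℝ) ^ q * (((l : ℝ) + q + 1) / 2)))
            * ((-1 : ℝ) ^ i * (p.choose i : ℝ) / ((l : ℝ) + i + 1)) := by
      intro i _
      have : ((l : ℝ) + i + 1) ≠ 0 := by positivity
      field_simp
    rw [Finset.sum_congr rfl inner, ← Finset.mul_sum, aux_beta p l]
    ring
  rw [Finset.sum_congr rfl step4, ← Finset.sum_mul, aux_tel (q + 1 + d) l q (by omega)]
  -- Step 5: final closed-form algebra
  rw [show l + q - l = q from by omega]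
  have hCL : 0 < (l + q + 1 + d).choose l := Nat.choose_pos (by omega)
  have hCLr : (((l + q + 1 + d).choose l : ℕ) : ℝ) ≠ 0 := by exact_mod_cast hCL.ne'
  have keyfin : (l + q + 1) * ((q + 1 + d).choose (q + 1)) * (q + 1)! * l !
        * ((l + q + 1 + d).choose l)
      = (d + 1) * ((l + q + 1 + d).choose (l + q)) * (l + q + 1)! := by
    have c1 : (q + 1 + d).choose (q + 1) * (q + 1)! * d ! = (q + 1 + d)! := by
      have := Nat.choose_mul_factorial_mul_factorial (show q + 1 ≤ q + 1 + d by omega)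
      rwa [show q + 1 + d - (q + 1) = d from by omega] at this
    have c2 : (l + q + 1 + d).choose l * l ! * (q + 1 + d)! = (l + q + 1 + d)! := by
      have := Nat.choose_mul_factorial_mul_factorial (show l ≤ l + q + 1 + d by omega)
      rwa [show l + q + 1 + d - l = q + 1 + d from by omega] at this
    have c3 : (l + q + 1 + d).choose (l + q) * (l + q)! * (d + 1)! = (l + q + 1 + d)! := by
      have := Nat.choose_mul_factorial_mul_factorial (show l + q ≤ l + q + 1 + d by omega)
      rwa [show l + q + 1 + d - (l + q) = d + 1 from by omega] at this
    apply Nat.eq_of_mul_eq_mul_right (Nat.factorial_pos d)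
    calc (l + q + 1) * ((q + 1 + d).choose (q + 1)) * (q + 1)! * l !
          * ((l + q + 1 + d).choose l) * d !
        = (l + q + 1) * (((l + q + 1 + d).choose l * l !)
            * ((q + 1 + d).choose (q + 1) * (q + 1)! * d !)) := by ring
      _ = (l + q + 1) * ((l + q + 1 + d).choose l * l ! * (q + 1 + d)!) := by rw [c1]
      _ = (l + q + 1) * (l + q + 1 + d)! := by rw [c2]
      _ = (l + q + 1) * ((l + q + 1 + d).choose (l + q) * (l + q)! * (d + 1)!) := by rw [c3]
      _ = (d + 1) * ((l + q + 1 + d).choose (l + q)) * (l + q + 1)! * d ! := by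
          rw [Nat.factorial_succ (l + q), Nat.factorial_succ d]; ring
  have kr := congrArg (fun t : ℕ => (t : ℝ)) keyfin
  push_cast at kr
  have hCq1 : (((q + 1 + d).choose (q + 1) : ℕ) : ℝ)
      = ((d : ℝ) + 1) * (((l + q + 1 + d).choose (l + q) : ℕ) : ℝ) * (((l + q + 1)! : ℕ) : ℝ)
        / ((((l : ℝ) + q + 1) * (((q + 1)! : ℕ) : ℝ) * ((l ! : ℕ) : ℝ))
            * (((l + q + 1 + d).choose l : ℕ) : ℝ)) := by
    rw [eq_div_iff (by
      apply mul_ne_zero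
      apply mul_ne_zero
      apply mul_ne_zero
      · positivity
      · exact_mod_cast (Nat.factorial_pos (q + 1)).ne'
      · exact_mod_cast (Nat.factorial_pos l).ne'
      · exact hCLr)]
    linear_combination kr
  rw [hCq1]
  have n1 : (((l + q + 1)! : ℕ) : ℝ) ≠ 0 := by exact_mod_cast (Nat.factorial_pos _).ne'
  have n2 : (((q + 1)! : ℕ) : ℝ) ≠ 0 := by exact_mod_cast (Nat.factorial_pos _).ne'
  have n3 : ((l ! : ℕ) : ℝ) ≠ 0 := by exact_mod_cast (Nat.factorial_pos _).ne'
  rcases Nat.even_or_odd q with hq | hq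
  · rw [hq.neg_one_pow]
    push_cast
    field_simp
    ring
  · rw [hq.neg_one_pow]
    push_cast
    field_simp
    ring
end

section
/- For all integers 0 ≤ m < k, ∑_{t=0}^{k-m-1} (t+1) · C(k-t, m) = (k+1-m) · C(k+1, m+1) − (m+1) · C(k+1, m+2) − (k+1-m) (an identity in ℤ). -/
lemma hs_sum (m n : ℕ) :
    ∑ t ∈ Finset.range n, ((m + n - t).choose m : ℤ)
      = ((m + n + 1).choose (m + 1) : ℤ) - 1 := by
  induction n with
  | zero => simp
  | succ n ih =>
      rw [Finset.sum_range_succ']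
      have h1 : ∀ t : ℕ, m + (n + 1) - (t + 1) = m + n - t := by omega
      simp only [h1]
      have h0 : m + (n + 1) - 0 = m + n + 1 := by omega
      rw [h0, ih]
      have : (m + (n + 1) + 1).choose (m + 1)
          = (m + n + 1).choose m + (m + n + 1).choose (m + 1) := by
        rw [show m + (n + 1) + 1 = (m + n + 1) + 1 by ring]
        exact Nat.choose_succ_succ' (m + n + 1) m
      rw [this]
      push_cast
      ring

lemma aux_sum (m n : ℕ) :
    ∑ t ∈ Finset.range n, ((t : ℤ) + 1) * ((m + n - t).choose m : ℤ)
      = ((n : ℤ) + 1) * ((m + n + 1).choose (m + 1) : ℤ)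
        - ((m : ℤ) + 1) * ((m + n + 1).choose (m + 2) : ℤ)
        - ((n : ℤ) + 1) := by
  induction n with
  | zero => simp [Nat.choose_eq_zero_of_lt (by omega : m + 1 < m + 2)]
  | succ n ih =>
      rw [Finset.sum_range_succ']
      have h1 : ∀ t : ℕ, m + (n + 1) - (t + 1) = m + n - t := by omega
      simp only [h1]
      have h0 : m + (n + 1) - 0 = m + n + 1 := by omega
      rw [h0]
      have expand : ∀ t : ℕ, ((t : ℤ) + 1 + 1) * ((m + n - t).choose m : ℤ)
          = ((t : ℤ) + 1) * ((m + n - t).choose m : ℤ) + ((m + n - t).choose m : ℤ) := by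
        intro t; ring
      simp only [Nat.cast_add, Nat.cast_one] at *
      simp only [expand, Finset.sum_add_distrib, ih, hs_sum]
      -- Pascal identities
      have hp1 : (m + (n + 1) + 1).choose (m + 1)
          = (m + n + 1).choose m + (m + n + 1).choose (m + 1) := by
        rw [show m + (n + 1) + 1 = (m + n + 1) + 1 by ring]
        exact Nat.choose_succ_succ' (m + n + 1) m
      have hp2 : (m + (n + 1) + 1).choose (m + 2)
          = (m + n + 1).choose (m + 1) + (m + n + 1).choose (m + 2) := by
        rw [show m + (n + 1) + 1 = (m + n + 1) + 1 by ring]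
        exact Nat.choose_succ_succ' (m + n + 1) (m + 1)
      rw [hp1, hp2]
      -- key absorption identity: (m+1)·C(m+n+1,m+1) = (n+1)·C(m+n+1,m)
      have hkey : ((m + n + 1).choose (m + 1) : ℤ) * (m + 1)
          = ((m + n + 1).choose m : ℤ) * (n + 1) := by
        have := Nat.choose_succ_right_eq (m + n + 1) m
        have h2 : m + n + 1 - m = n + 1 := by omega
        rw [h2] at this
        exact_mod_cast congrArg (Nat.cast : ℕ → ℤ) this
      push_cast
      push_cast at hkey
      linear_combination hkey

/-- For `0 ≤ m < k`,
`∑_{t=0}^{k-m-1} (t+1)·C(k-t,m)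
  = (k+1-m)·C(k+1,m+1) − (m+1)·C(k+1,m+2) − (k+1-m)` in `ℤ`. -/
theorem weighted_choose_sum (k m : ℕ) (hmk : m < k) :
    ∑ t ∈ Finset.range (k - m), ((t : ℤ) + 1) * ((k - t).choose m : ℤ)
      = ((k : ℤ) + 1 - m) * ((k + 1).choose (m + 1) : ℤ)
        - ((m : ℤ) + 1) * ((k + 1).choose (m + 2) : ℤ)
        - ((k : ℤ) + 1 - m) := by
  have h := aux_sum m (k - m)
  have hkm : m + (k - m) = k := by omega
  rw [hkm] at h
  rw [h]
  have : ((k - m : ℕ) : ℤ) = (k : ℤ) - m := by omega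
  rw [this]
  ring
end
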